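/- Let H be an upper semicontinuous decomposition of the circle S¹ = ∂B² into compact sets that is noncrossing: for distinct h₁, h₂ ∈ H, no element h₁ separates h₂ within S¹ (equivalently, the convex hulls of h₁ and h₂ in B² are disjoint). Let G be the decomposition of B² whose elements are the convex hulls conv(h) for h ∈ H together with singletons not covered by these hulls. Then the induced decomposition of ℝ² (extending G trivially) is upper semicontinuous, and each of its elements is cellular (a point or a compact convex set). -/

import Mathlib

open Set Function Topology Filter

/-- The plane. -/
abbrev Plane := EuclideanSpace ℝ (Fin 2)

/-- A family of subsets is upper semicontinuous (in the sequential sense):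
whenever `x n` and `y n` lie in a common element `g n` of the family and
`x n → x₀`, `y n → y₀`, the limits `x₀`, `y₀` lie in a common element. -/
def IsUSCFamily {α : Type*} [TopologicalSpace α] (G : Set (Set α)) : Prop :=
  ∀ (g : ℕ → Set α) (x y : ℕ → α) (x₀ y₀ : α),
    (∀ n, g n ∈ G) → (∀ n, x n ∈ g n) → (∀ n, y n ∈ g n) →
    Tendsto x atTop (nhds x₀) → Tendsto y atTop (nhds y₀) →
    ∃ g₀ ∈ G, x₀ ∈ g₀ ∧ y₀ ∈ g₀

/-- The decomposition of the plane induced by a decomposition `H` of the unit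
circle: convex hulls of the elements of `H`, plus singletons not covered by
these hulls. -/
def hullDecomposition (H : Set (Set Plane)) : Set (Set Plane) :=
  {g | ∃ h ∈ H, g = convexHull ℝ h} ∪
    {g | ∃ x ∉ ⋃ h ∈ H, convexHull ℝ h, g = ({x} : Set Plane)}

/-- Carathéodory in the plane: a point of a convex hull is a convex combination
of three points of the set. -/
lemma exists_fin3_rep {s : Set Plane} {x : Plane} (hx : x ∈ convexHull ℝ s) :
    ∃ (a : Fin 3 → ℝ) (p : Fin 3 → Plane),
      (∀ i, 0 ≤ a i) ∧ ∑ i, a i = 1 ∧ (∀ i, p i ∈ s) ∧ ∑ i, a i • p i = x := by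
  classical
  obtain ⟨ι, hfin, z, w, hzs, hai, hw0, hw1, hwz⟩ :=
    eq_pos_convex_span_of_mem_convexHull hx
  letI := hfin
  have hcard : Fintype.card ι ≤ 3 := by
    have h1 := hai.card_le_finrank_succ
    have h2 : Module.finrank ℝ (vectorSpan ℝ (Set.range z)) ≤ 2 := by
      have h3 := Submodule.finrank_le (vectorSpan ℝ (Set.range z))
      simpa [finrank_euclideanSpace] using h3
    omega
  have hιne : Nonempty ι := by
    by_contra h
    rw [not_nonempty_iff] at h
    simp at hw1
  let e := Fintype.equivFin ι
  let emb : ι → Fin 3 := fun i => Fin.castLE hcard (e i)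
  have hemb : Function.Injective emb := fun i j hij =>
    e.injective (Fin.castLE_injective _ hij)
  let i₀ := Classical.arbitrary ι
  refine ⟨fun j => ∑ i, if emb i = j then w i else 0,
    Function.extend emb z fun _ => z i₀, ?_, ?_, ?_, ?_⟩
  · intro j
    refine Finset.sum_nonneg fun i _ => ?_
    split_ifs with h
    · exact (hw0 i).le
    · exact le_rfl
  · rw [Finset.sum_comm]
    simp only [Finset.sum_ite_eq, Finset.mem_univ, if_true]
    exact hw1
  · intro j
    rw [Function.extend_def]
    split
    · exact hzs ⟨_, rfl⟩
    · exact hzs ⟨_, rfl⟩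
  · have key : ∀ j, (∑ i, if emb i = j then w i else 0) •
        Function.extend emb z (fun _ => z i₀) j =
        ∑ i, if emb i = j then w i • z i else 0 := by
      intro j
      rw [Finset.sum_smul]
      refine Finset.sum_congr rfl fun i _ => ?_
      split_ifs with h
      · rw [← h, hemb.extend_apply]
      · rw [zero_smul]
    rw [Finset.sum_congr rfl fun j _ => key j, Finset.sum_comm]
    simp only [Finset.sum_ite_eq, Finset.mem_univ, if_true]
    exact hwz

/-- The convex hull of a compact subset of the plane is compact. -/
lemma isCompact_convexHull_plane {s : Set Plane} (hs : IsCompact s) :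
    IsCompact (convexHull ℝ s) := by
  rcases s.eq_empty_or_nonempty with rfl | hne
  · simp [convexHull_empty, isCompact_empty]
  have himg : convexHull ℝ s =
      (fun q : (Fin 3 → ℝ) × (Fin 3 → Plane) => ∑ i, q.1 i • q.2 i) ''
        (stdSimplex ℝ (Fin 3) ×ˢ Set.univ.pi fun _ => s) := by
    apply Set.Subset.antisymm
    · intro x hx
      obtain ⟨a, p, ha0, ha1, hps, hsum⟩ := exists_fin3_rep hx
      exact ⟨(a, p), ⟨⟨ha0, ha1⟩, fun i _ => hps i⟩, hsum⟩
    · rintro x ⟨⟨a, p⟩, ⟨⟨ha0, ha1⟩, hps⟩, rfl⟩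
      exact mem_convexHull_of_exists_fintype a p ha0 ha1
        (fun i => hps i (Set.mem_univ i)) rfl
  rw [himg]
  refine IsCompact.image ?_ ?_
  · exact (isCompact_stdSimplex (𝕜 := ℝ) (ι := Fin 3)).prod (isCompact_univ_pi fun _ => hs)
  · exact continuous_finset_sum _ fun i _ =>
      ((continuous_apply i).comp continuous_fst).smul
        ((continuous_apply i).comp continuous_snd)

/-- If `H` is an upper semicontinuous decomposition of the circle `S¹` into
compact sets which is noncrossing (the convex hulls of distinct elements are
disjoint), then the induced decomposition of the plane by convex hulls (extended
trivially by singletons) is upper semicontinuous, and each of its elements is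
cellular: a point or a compact convex set. -/
theorem stmt_15 (H : Set (Set Plane))
    (hcover : ⋃₀ H = Metric.sphere (0 : Plane) 1)
    (hne : ∀ h ∈ H, h.Nonempty) (hcpt : ∀ h ∈ H, IsCompact h)
    (hdisj : H.Pairwise fun h₁ h₂ => Disjoint h₁ h₂)
    (husc : IsUSCFamily H)
    (hnoncross : H.Pairwise fun h₁ h₂ =>
      convexHull ℝ h₁ ∩ convexHull ℝ h₂ = ∅) :
    IsUSCFamily (hullDecomposition H) ∧
      ∀ g ∈ hullDecomposition H,
        g.Subsingleton ∨ (IsCompact g ∧ Convex ℝ g) := by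
  constructor
  · -- upper semicontinuity
    intro g x y x₀ y₀ hgG hxg hyg hx hy
    by_cases hfreq : ∃ᶠ n in atTop, ∃ h ∈ H, g n = convexHull ℝ h
    · -- hull case
      obtain ⟨φ, hφ, hφP⟩ := Filter.extraction_of_frequently_atTop hfreq
      choose h' hh'H hgh' using hφP
      choose r hr using fun n => hne (h' n) (hh'H n)
      have hrs : ∀ n, r n ∈ Metric.sphere (0 : Plane) 1 := by
        intro n
        rw [← hcover]
        exact ⟨h' n, hh'H n, hr n⟩
      obtain ⟨R, hRs, ψ, hψ, hrψ⟩ :=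
        (isCompact_sphere (0 : Plane) 1).tendsto_subseq hrs
      obtain ⟨h₀, hh₀, hRh₀, -⟩ :=
        husc (fun n => h' (ψ n)) (fun n => r (ψ n)) (fun n => r (ψ n)) R R
          (fun n => hh'H _) (fun n => hr _) (fun n => hr _) hrψ hrψ
      -- any limit of points of the `h' (ψ (χ n))` lies in `h₀`
      have hA : ∀ (χ : ℕ → ℕ), StrictMono χ → ∀ (s : ℕ → Plane) (S : Plane),
          (∀ n, s n ∈ h' (ψ (χ n))) → Tendsto s atTop (nhds S) → S ∈ h₀ := by
        intro χ hχ s S hs hS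
        obtain ⟨e, heH, hRe, hSe⟩ :=
          husc (fun n => h' (ψ (χ n))) (fun n => r (ψ (χ n))) s R S
            (fun n => hh'H _) (fun n => hr _) hs
            (hrψ.comp hχ.tendsto_atTop) hS
        by_cases hcase : e = h₀
        · exact hcase ▸ hSe
        · exact absurd hRh₀ (Set.disjoint_left.mp (hdisj heH hh₀ hcase) hRe)
      -- limits of points of the hulls lie in the hull of `h₀`
      have hB : ∀ (w : ℕ → Plane) (w₀ : Plane),
          (∀ n, w n ∈ convexHull ℝ (h' (ψ n))) → Tendsto w atTop (nhds w₀) →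
          w₀ ∈ convexHull ℝ h₀ := by
        intro w w₀ hw hwt
        by_contra hout
        obtain ⟨f, u, hfu, hux⟩ :=
          geometric_hahn_banach_closed_point (convex_convexHull ℝ h₀)
            (isCompact_convexHull_plane (hcpt h₀ hh₀)).isClosed hout
        have hmax : ∀ n, ∃ p ∈ h' (ψ n), ∀ q ∈ h' (ψ n), f q ≤ f p := by
          intro n
          obtain ⟨p, hp, hpmax⟩ := (hcpt _ (hh'H (ψ n))).exists_isMaxOn
            (hne _ (hh'H (ψ n))) f.continuous.continuousOn
          exact ⟨p, hp, fun q hq => hpmax hq⟩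
        choose p hp hpmax using hmax
        have hwp : ∀ n, f (w n) ≤ f (p n) := by
          intro n
          have hlin : IsLinearMap ℝ f := ⟨f.map_add, f.map_smul⟩
          have hsub : convexHull ℝ (h' (ψ n)) ⊆ {v | f v ≤ f (p n)} :=
            convexHull_min (fun q hq => hpmax n q hq)
              (convex_halfSpace_le hlin _)
          exact hsub (hw n)
        have hps : ∀ n, p n ∈ Metric.sphere (0 : Plane) 1 := by
          intro n
          rw [← hcover]
          exact ⟨h' (ψ n), hh'H (ψ n), hp n⟩
        obtain ⟨P, hPs, χ, hχ, hpχ⟩ :=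
          (isCompact_sphere (0 : Plane) 1).tendsto_subseq hps
        have hPh₀ : P ∈ h₀ := hA χ hχ (fun n => p (χ n)) P (fun n => hp (χ n)) hpχ
        have h1 : Tendsto (fun n => f (w (χ n))) atTop (nhds (f w₀)) :=
          (f.continuous.tendsto w₀).comp (hwt.comp hχ.tendsto_atTop)
        have h2 : Tendsto (fun n => f (p (χ n))) atTop (nhds (f P)) :=
          (f.continuous.tendsto P).comp hpχ
        have h3 : f w₀ ≤ f P :=
          le_of_tendsto_of_tendsto' h1 h2 fun n => hwp (χ n)
        have h4 : f P < u := hfu P (subset_convexHull ℝ h₀ hPh₀)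
        linarith
      refine ⟨convexHull ℝ h₀, Or.inl ⟨h₀, hh₀, rfl⟩, ?_, ?_⟩
      · refine hB (fun n => x (φ (ψ n))) x₀ (fun n => ?_)
          (hx.comp ((hφ.comp hψ).tendsto_atTop))
        have := hxg (φ (ψ n))
        rwa [hgh' (ψ n)] at this
      · refine hB (fun n => y (φ (ψ n))) y₀ (fun n => ?_)
          (hy.comp ((hφ.comp hψ).tendsto_atTop))
        have := hyg (φ (ψ n))
        rwa [hgh' (ψ n)] at this
    · -- singleton case
      have hfreq' : ∃ᶠ n in atTop, ¬∃ h ∈ H, g n = convexHull ℝ h :=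
        (Filter.not_frequently.mp hfreq).frequently
      obtain ⟨φ, hφ, hφP⟩ := Filter.extraction_of_frequently_atTop hfreq'
      have hsingle : ∀ n, x (φ n) = y (φ n) := by
        intro n
        rcases hgG (φ n) with hl | ⟨z, _, hzz⟩
        · exact absurd hl (hφP n)
        · have h1 := hxg (φ n)
          have h2 := hyg (φ n)
          rw [hzz, Set.mem_singleton_iff] at h1 h2
          rw [h1, h2]
      have hxy : x₀ = y₀ := by
        have t1 : Tendsto (fun n => x (φ n)) atTop (nhds x₀) :=
          hx.comp hφ.tendsto_atTop
        have t2 : Tendsto (fun n => x (φ n)) atTop (nhds y₀) := by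
          have heq : (fun n => x (φ n)) = fun n => y (φ n) := funext hsingle
          rw [heq]
          exact hy.comp hφ.tendsto_atTop
        exact tendsto_nhds_unique t1 t2
      by_cases hx₀ : x₀ ∈ ⋃ h ∈ H, convexHull ℝ h
      · obtain ⟨h, hh, hxh⟩ := Set.mem_iUnion₂.mp hx₀
        exact ⟨convexHull ℝ h, Or.inl ⟨h, hh, rfl⟩, hxh, hxy ▸ hxh⟩
      · exact ⟨{x₀}, Or.inr ⟨x₀, hx₀, rfl⟩, rfl, hxy ▸ rfl⟩
  · -- cellularity
    rintro g (⟨h, hh, rfl⟩ | ⟨z, _, rfl⟩)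
    · exact Or.inr ⟨isCompact_convexHull_plane (hcpt h hh), convex_convexHull ℝ h⟩
    · exact Or.inl Set.subsingleton_singleton
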